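/- In the Prisoner's Dilemma variant with parameter ζ ∈ (0, 0.2] (two players, actions {C, D}, utilities U(C,C) = (0.6, 0.6), U(C,D) = (0.2 − ζ, 1), U(D,C) = (1, 0.2 − ζ), U(D,D) = (0.2, 0.2)), for every p ∈ [0, 1] the joint strategy π_p = (1 − p)·δ_{(D,D)} + p·δ_{(C,D)} satisfies exploitability(π_p) = ζ·p and social welfare SW(π_p) = 0.4 + (0.8 − ζ)·p. -/
import Mathlib


open Finset

/-- A probability distribution on a finite type. -/
def IsDist {X : Type*} [Fintype X] (p : X → ℝ) : Prop :=
  (∀ x, 0 ≤ p x) ∧ ∑ x, p x = 1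

/-- The exploitability of a joint strategy:
`max_{i} max_{â_i ∈ 𝒜_i} E_{a∼π}[𝒰_i(â_i, a_{−i}) − 𝒰_i(a)]`. -/
noncomputable def expl {N : ℕ} {A : Fin N → Type} [∀ i, Fintype (A i)] [∀ i, DecidableEq (A i)]
    (U : Fin N → ((i : Fin N) → A i) → ℝ) (π : ((i : Fin N) → A i) → ℝ) : ℝ :=
  sSup {x | ∃ (i : Fin N) (b : A i),
    x = ∑ a, π a * (U i (Function.update a i b) - U i a)}

/-- Social welfare: the sum of all players' expected utilities. -/
noncomputable def SW {N : ℕ} {A : Fin N → Type} [∀ i, Fintype (A i)]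
    (U : Fin N → ((i : Fin N) → A i) → ℝ) (π : ((i : Fin N) → A i) → ℝ) : ℝ :=
  ∑ i, ∑ a, π a * U i a

/-- The exploitability welfare frontier: the maximum social welfare over all `ε`-CCEs. -/
noncomputable def EWF {N : ℕ} {A : Fin N → Type} [∀ i, Fintype (A i)] [∀ i, DecidableEq (A i)]
    (U : Fin N → ((i : Fin N) → A i) → ℝ) (ε : ℝ) : ℝ :=
  sSup {x | ∃ π, IsDist π ∧ expl U π ≤ ε ∧ x = SW U π}

/-- Utility of player `i` in the Prisoner's Dilemma variant with parameter `ζ`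
(`false` = Confess, `true` = Defect): U(C,C) = (0.6, 0.6), U(C,D) = (0.2 − ζ, 1),
U(D,C) = (1, 0.2 − ζ), U(D,D) = (0.2, 0.2). -/
noncomputable def pdζU (ζ : ℝ) (i : Fin 2) (a : Fin 2 → Bool) : ℝ :=
  if a i = false then (if a (i + 1) = false then 0.6 else 0.2 - ζ)
  else (if a (i + 1) = false then 1 else 0.2)

/-- The mixture `π_p = (1−p)·δ_{(D,D)} + p·δ_{(C,D)}`. -/
noncomputable def pdζMix (p : ℝ) : (Fin 2 → Bool) → ℝ := fun a =>
  (1 - p) * (if a = ![true, true] then 1 else 0) +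
    p * (if a = ![false, true] then 1 else 0)


private lemma mix_sum18 (p : ℝ) (f : (Fin 2 → Bool) → ℝ) :
    ∑ a, pdζMix p a * f a = (1 - p) * f ![true, true] + p * f ![false, true] := by
  have : ∀ a : Fin 2 → Bool, pdζMix p a * f a =
      (if a = ![true, true] then (1 - p) * f a else 0) +
      (if a = ![false, true] then p * f a else 0) := by
    intro a
    simp [pdζMix, add_mul, mul_assoc, ite_mul, mul_ite]
  simp only [this, Finset.sum_add_distrib, Finset.sum_ite_eq', Finset.mem_univ, if_true]

/-- In the Prisoner's Dilemma variant with `ζ ∈ (0, 0.2]`, for every `p ∈ [0,1]` the joint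
strategy `π_p = (1−p)·δ_{(D,D)} + p·δ_{(C,D)}` has exploitability exactly `ζ·p` and social
welfare exactly `0.4 + (0.8 − ζ)·p`. -/
theorem stmt18 (ζ : ℝ) (hζ : ζ ∈ Set.Ioc (0 : ℝ) 0.2) (p : ℝ) (hp : p ∈ Set.Icc (0 : ℝ) 1) :
    expl (pdζU ζ) (pdζMix p) = ζ * p ∧
      SW (pdζU ζ) (pdζMix p) = 0.4 + (0.8 - ζ) * p := by
  obtain ⟨hζ0, hζ2⟩ := hζ
  obtain ⟨hp0, hp1⟩ := hp
  have hval : ∀ (i : Fin 2) (b : Bool),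
      ∑ a, pdζMix p a * (pdζU ζ i (Function.update a i b) - pdζU ζ i a) =
        if i = 0 then (if b then ζ * p else -ζ * (1 - p))
        else (if b then 0 else -ζ * (1 - p) - 0.4 * p) := by
    intro i b
    rw [mix_sum18]
    fin_cases i <;> cases b <;>
      simp [pdζU, Function.update, show ((1:Fin 2)+1) = 0 from rfl,
        show ((0:Fin 2)+1) = 1 from rfl] <;> ring
  constructor
  · have hub : ∀ x ∈ {x | ∃ (i : Fin 2) (b : Bool),
        x = ∑ a, pdζMix p a * (pdζU ζ i (Function.update a i b) - pdζU ζ i a)}, x ≤ ζ * p := by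
      rintro x ⟨i, b, rfl⟩
      rw [hval]
      fin_cases i <;> cases b <;> simp <;> nlinarith
    have hmem : ζ * p ∈ {x | ∃ (i : Fin 2) (b : Bool),
        x = ∑ a, pdζMix p a * (pdζU ζ i (Function.update a i b) - pdζU ζ i a)} := by
      exact ⟨0, true, by rw [hval]; simp⟩
    refine le_antisymm (Real.sSup_le hub (by positivity)) ?_
    exact le_csSup ⟨ζ * p, hub⟩ hmem
  · unfold SW
    rw [Fin.sum_univ_two, mix_sum18, mix_sum18]
    simp [pdζU, show ((1:Fin 2)+1) = 0 from rfl, show ((0:Fin 2)+1) = 1 from rfl]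
    ring
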